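/- For partitions β, α and any symmetric function g, Foulkes's identity holds: D_β(s_α · g) = Σ_λ s_{α/λ} · D_{β/λ}(g), where the sum is over all partitions λ. -/

import Mathlib

open scoped TensorProduct Classical

noncomputable section

/-- The single-row Young diagram with `k` boxes, whose Schur function is `h_k`
and whose power sum is `p_k`. -/
def rowDiagram (k : ℕ) : YoungDiagram :=
  YoungDiagram.ofRowLens [k] (List.Pairwise.sortedGE (List.pairwise_singleton _ k))

/-- The quantity `z_λ = ∏ i^{m_i} m_i!` attached to a partition (Young diagram). -/
def zee (μ : YoungDiagram) : ℚ :=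
  ((μ.rowLens.prod * (μ.rowLens.dedup.map fun i => (μ.rowLens.count i).factorial).prod : ℕ) : ℚ)

/-- The ring of symmetric functions over `ℚ`, presented with its Schur basis `s`,
its power-sum basis `p`, the Hall inner product (for which the Schur functions are
orthonormal and `⟨p_λ, p_μ⟩ = δ_{λμ} z_λ`), the skewing operators `D f` (adjoint of
multiplication by `f`), and the Kronecker product `kron`
(determined by `p_λ ∗ p_μ = δ_{λμ} z_λ p_λ`). -/
structure SymmFn (Λ : Type*) [CommRing Λ] [Algebra ℚ Λ] where
  /-- the Schur basis -/
  s : Module.Basis YoungDiagram ℚ Λ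
  /-- the power-sum basis -/
  p : Module.Basis YoungDiagram ℚ Λ
  /-- the Hall inner product -/
  inner : Λ →ₗ[ℚ] Λ →ₗ[ℚ] ℚ
  inner_symm : ∀ f g, inner f g = inner g f
  inner_schur : ∀ μ ν, inner (s μ) (s ν) = if μ = ν then 1 else 0
  inner_power : ∀ μ ν, inner (p μ) (p ν) = if μ = ν then zee μ else 0
  power_mul : ∀ μ : YoungDiagram, p μ = (μ.rowLens.map fun k => p (rowDiagram k)).prod
  /-- the skewing operator `D f`, adjoint of multiplication by `f` -/
  D : Λ → Λ →ₗ[ℚ] Λ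
  D_adjoint : ∀ f g h, inner (D f g) h = inner g (f * h)
  /-- the Kronecker (internal) product -/
  kron : Λ →ₗ[ℚ] Λ →ₗ[ℚ] Λ
  kron_power : ∀ μ ν, kron (p μ) (p ν) = if μ = ν then zee μ • p μ else 0

namespace SymmFn

variable {Λ : Type*} [CommRing Λ] [Algebra ℚ Λ] (S : SymmFn Λ)

/-- The operator `U f` of multiplication by `f`. -/
def U (_S : SymmFn Λ) (f : Λ) : Λ →ₗ[ℚ] Λ := LinearMap.mulLeft ℚ f

/-- The skew Schur function `s_{α/θ} = D_{s_θ}(s_α)`. -/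
def skew (α θ : YoungDiagram) : Λ := S.D (S.s θ) (S.s α)


/-! ### Auxiliary machinery -/

/-- The Young diagram attached to a multiset of (positive) row lengths. -/
def mdgm (M : Multiset ℕ) : YoungDiagram :=
  YoungDiagram.ofRowLens (M.sort (· ≥ ·)) (M.pairwise_sort _).sortedGE

lemma rowLens_injective {μ ν : YoungDiagram} (h : μ.rowLens = ν.rowLens) : μ = ν :=
  YoungDiagram.equivListRowLens.injective (Subtype.ext h)

lemma coe_rowLens_mdgm (M : Multiset ℕ) (h : ∀ x ∈ M, 0 < x) :
    ((mdgm M).rowLens : Multiset ℕ) = M := by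
  rw [mdgm, YoungDiagram.rowLens_ofRowLens_eq_self, Multiset.sort_eq]
  intro x hx
  exact h x ((Multiset.mem_sort _).1 hx)

lemma mdgm_eq_of_coe_rowLens {μ : YoungDiagram} {M : Multiset ℕ}
    (h : (μ.rowLens : Multiset ℕ) = M) : mdgm M = μ := by
  subst h
  apply rowLens_injective
  apply List.Perm.eq_of_sortedGE ((mdgm _).rowLens_sorted) (μ.rowLens_sorted)
    (Multiset.coe_eq_coe.1 ?_)
  exact coe_rowLens_mdgm _ μ.pos_of_mem_rowLens

lemma pos_of_mem_coe_rowLens (μ : YoungDiagram) (x : ℕ)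
    (hx : x ∈ (μ.rowLens : Multiset ℕ)) : 0 < x :=
  μ.pos_of_mem_rowLens x (by exact_mod_cast hx)

lemma rowLens_bot : (⊥ : YoungDiagram).rowLens = [] := by
  rw [← List.length_eq_zero_iff, YoungDiagram.length_rowLens, YoungDiagram.colLen, Nat.find_eq_zero]
  simp [YoungDiagram.notMem_bot]

lemma coe_rowLens_eq_zero_iff {μ : YoungDiagram} :
    (μ.rowLens : Multiset ℕ) = 0 ↔ μ = ⊥ := by
  constructor
  · intro h
    apply rowLens_injective
    rw [rowLens_bot]
    exact (Multiset.coe_eq_zero _).1 h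
  · rintro rfl
    rw [rowLens_bot]; rfl

lemma rowLens_rowDiagram {k : ℕ} (hk : 0 < k) : (rowDiagram k).rowLens = [k] := by
  rw [rowDiagram, YoungDiagram.rowLens_ofRowLens_eq_self]
  intro x hx
  simp only [List.mem_singleton] at hx
  subst hx; exact hk

/-- `zee` as a function of the multiset of row lengths. -/
def zm (M : Multiset ℕ) : ℕ :=
  M.prod * ∏ i ∈ M.toFinset, (M.count i).factorial

lemma zm_coe (L : List ℕ) :
    zm (L : Multiset ℕ)
      = L.prod * (L.dedup.map fun i => (L.count i).factorial).prod := by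
  rw [zm, Multiset.prod_coe]
  congr 1
  rw [Finset.prod_eq_multiset_prod, List.toFinset_coe, List.toFinset_val,
    Multiset.map_coe, Multiset.prod_coe]
  congr 1
  apply List.map_congr_left
  intro i _
  rw [Multiset.coe_count]

lemma zee_eq_zm (μ : YoungDiagram) : zee μ = (zm (μ.rowLens : Multiset ℕ) : ℚ) := by
  rw [zee, zm_coe]

lemma zm_cons (k : ℕ) (M : Multiset ℕ) :
    zm (k ::ₘ M) = (k * (M.count k + 1)) * zm M := by
  rw [zm, zm, Multiset.prod_cons]
  by_cases hk : k ∈ M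
  · have htf : (k ::ₘ M).toFinset = M.toFinset := by
      rw [Multiset.toFinset_cons, Finset.insert_eq_self.2 (Multiset.mem_toFinset.2 hk)]
    rw [htf]
    have hmem : k ∈ M.toFinset := Multiset.mem_toFinset.2 hk
    rw [← Finset.mul_prod_erase _ _ hmem, ← Finset.mul_prod_erase _ (fun i => (M.count i).factorial) hmem]
    have hco : ∀ i ∈ M.toFinset.erase k, ((k ::ₘ M).count i).factorial = (M.count i).factorial := by
      intro i hi
      rw [Multiset.count_cons_of_ne (Finset.ne_of_mem_erase hi) ]
    rw [Finset.prod_congr rfl hco]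
    rw [Multiset.count_cons_self, Nat.factorial_succ]
    ring
  · have hc0 : M.count k = 0 := Multiset.count_eq_zero.2 hk
    rw [Multiset.toFinset_cons, Finset.prod_insert (by simpa using hk)]
    have hco : ∀ i ∈ M.toFinset, ((k ::ₘ M).count i).factorial = (M.count i).factorial := by
      intro i hi
      have : i ≠ k := by rintro rfl; exact hk (Multiset.mem_toFinset.1 hi)
      rw [Multiset.count_cons_of_ne this]
    rw [Finset.prod_congr rfl hco, Multiset.count_cons_self, hc0]
    simp [Nat.factorial]
    ring

/-- Product of power sums over a multiset of row lengths. -/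
def PP (M : Multiset ℕ) : Λ :=
  (M.map fun k => S.p (rowDiagram k)).prod

lemma p_eq_PP (μ : YoungDiagram) : S.p μ = S.PP (μ.rowLens : Multiset ℕ) := by
  rw [S.power_mul μ, PP, Multiset.map_coe, Multiset.prod_coe]

lemma PP_add (M N : Multiset ℕ) : S.PP (M + N) = S.PP M * S.PP N := by
  rw [PP, PP, PP, Multiset.map_add, Multiset.prod_add]

lemma PP_zero : S.PP 0 = 1 := by simp [PP]

lemma PP_cons (k : ℕ) (M : Multiset ℕ) :
    S.PP (k ::ₘ M) = S.p (rowDiagram k) * S.PP M := by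
  rw [PP, PP, Multiset.map_cons, Multiset.prod_cons]

lemma p_mdgm (M : Multiset ℕ) (h : ∀ x ∈ M, 0 < x) : S.p (mdgm M) = S.PP M := by
  rw [p_eq_PP, coe_rowLens_mdgm M h]

lemma p_bot : S.p ⊥ = 1 := by
  rw [p_eq_PP, rowLens_bot]; exact S.PP_zero

lemma p_row (k : ℕ) (hk : 0 < k) : S.p (rowDiagram k) = S.PP {k} := by
  rw [p_eq_PP, rowLens_rowDiagram hk]; rfl

lemma pos_add_rowLens (a b : YoungDiagram) :
    ∀ x ∈ (a.rowLens : Multiset ℕ) + (b.rowLens : Multiset ℕ), 0 < x := by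
  intro x hx
  rcases Multiset.mem_add.1 hx with h | h
  exacts [pos_of_mem_coe_rowLens a x h, pos_of_mem_coe_rowLens b x h]

lemma p_mul_p (a b : YoungDiagram) :
    S.p a * S.p b = S.p (mdgm ((a.rowLens : Multiset ℕ) + (b.rowLens : Multiset ℕ))) := by
  rw [S.p_mdgm _ (pos_add_rowLens a b), S.PP_add, ← S.p_eq_PP, ← S.p_eq_PP]

/-! ### Basic facts about the inner product and `D` -/

lemma inner_coord (x : Λ) (ν : YoungDiagram) : S.inner x (S.s ν) = S.s.repr x ν := by
  have : (S.inner.flip (S.s ν) : Λ →ₗ[ℚ] ℚ) = S.s.coord ν := by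
    apply S.s.ext
    intro μ
    simp only [LinearMap.flip_apply, Module.Basis.coord_apply, Module.Basis.repr_self]
    rw [S.inner_schur μ ν]
    simp [Finsupp.single_apply]
  have h := congrArg (fun f => f x) this
  simpa [Module.Basis.coord_apply] using h

lemma inner_ext {x y : Λ} (h : ∀ ρ, S.inner x (S.p ρ) = S.inner y (S.p ρ)) : x = y := by
  have hmap : (S.inner x : Λ →ₗ[ℚ] ℚ) = S.inner y := S.p.ext h
  apply S.s.ext_elem
  intro ν
  rw [← S.inner_coord x ν, ← S.inner_coord y ν, hmap]

lemma zee_bot : zee (⊥ : YoungDiagram) = 1 := by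
  rw [zee, rowLens_bot]; rfl

lemma inner_one_p (ρ : YoungDiagram) :
    S.inner 1 (S.p ρ) = if ρ = ⊥ then 1 else 0 := by
  rw [← S.p_bot, S.inner_power]
  by_cases h : ρ = ⊥
  · subst h; simp [zee_bot]
  · rw [if_neg (by exact fun hc => h hc.symm), if_neg h]

lemma D_congr_inner {f f' : Λ} (h : ∀ x y, S.inner x (f * y) = S.inner x (f' * y)) :
    S.D f = S.D f' := by
  ext x
  apply S.inner_ext
  intro ρ
  rw [S.D_adjoint, S.D_adjoint, h]

lemma D_comp (f g : Λ) (x : Λ) : S.D f (S.D g x) = S.D (f * g) x := by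
  apply S.inner_ext
  intro ρ
  rw [S.D_adjoint, S.D_adjoint, S.D_adjoint]
  congr 1
  ring

lemma D_add (f g : Λ) : S.D (f + g) = S.D f + S.D g := by
  ext x
  apply S.inner_ext
  intro ρ
  simp only [LinearMap.add_apply, map_add]
  rw [S.D_adjoint, S.D_adjoint, S.D_adjoint, add_mul, map_add]

lemma D_smul (c : ℚ) (f : Λ) : S.D (c • f) = c • S.D f := by
  ext x
  apply S.inner_ext
  intro ρ
  simp only [LinearMap.smul_apply, map_smul]
  rw [S.D_adjoint, S.D_adjoint, smul_mul_assoc, map_smul]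

lemma D_zero : S.D 0 = 0 := by
  ext x
  apply S.inner_ext
  intro ρ
  simp only [LinearMap.zero_apply, map_zero]
  rw [S.D_adjoint, zero_mul, map_zero]

lemma D_one : S.D 1 = LinearMap.id := by
  ext x
  apply S.inner_ext
  intro ρ
  rw [S.D_adjoint, one_mul]
  rfl

lemma D_sum {ι : Type*} (t : Finset ι) (f : ι → Λ) :
    S.D (∑ i ∈ t, f i) = ∑ i ∈ t, S.D (f i) := by
  classical
  induction t using Finset.induction_on with
  | empty => simpa using S.D_zero
  | insert _ _ hnotmem ih =>
      rw [Finset.sum_insert hnotmem, Finset.sum_insert hnotmem, S.D_add, ih]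

/-! ### The action of `D p_k` on the power-sum basis -/

lemma D_pk_p (k : ℕ) (hk : 0 < k) (θ : YoungDiagram) :
    S.D (S.p (rowDiagram k)) (S.p θ)
      = ((k * Multiset.count k (θ.rowLens : Multiset ℕ) : ℕ) : ℚ) •
          S.p (mdgm ((θ.rowLens : Multiset ℕ).erase k)) := by
  set Mθ : Multiset ℕ := (θ.rowLens : Multiset ℕ) with hMθ
  apply S.inner_ext
  intro ρ
  set Mρ : Multiset ℕ := (ρ.rowLens : Multiset ℕ) with hMρ
  have hposρ : ∀ x ∈ (k ::ₘ Mρ), 0 < x := by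
    intro x hx
    rcases Multiset.mem_cons.1 hx with h | h
    · subst h; exact hk
    · exact pos_of_mem_coe_rowLens ρ x h
  have hkr : S.p (rowDiagram k) * S.p ρ = S.p (mdgm (k ::ₘ Mρ)) := by
    have h1 : S.p (rowDiagram k) * S.p ρ = S.PP ({k} + Mρ) := by
      rw [S.PP_add, ← S.p_row k hk, hMρ, ← S.p_eq_PP]
    rw [h1, ← Multiset.singleton_add, S.p_mdgm _ (by rw [Multiset.singleton_add]; exact hposρ)]
  rw [S.D_adjoint, hkr, S.inner_power, map_smul, LinearMap.smul_apply, S.inner_power, smul_eq_mul]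
  by_cases hcase : k ∈ Mθ ∧ ρ = mdgm (Mθ.erase k)
  · obtain ⟨hkθ, hρ⟩ := hcase
    have hMρ' : Mρ = Mθ.erase k := by
      rw [hMρ, hρ, coe_rowLens_mdgm _ (fun x hx => pos_of_mem_coe_rowLens θ x (Multiset.mem_of_mem_erase hx))]
    have h1 : θ = mdgm (k ::ₘ Mρ) := by
      rw [hMρ', Multiset.cons_erase hkθ]
      exact (mdgm_eq_of_coe_rowLens rfl).symm
    rw [if_pos h1, if_pos hρ.symm, ← hρ]
    -- zee θ = k * count k Mθ * zee ρ
    rw [zee_eq_zm θ, zee_eq_zm ρ, ← hMθ, ← hMρ, hMρ']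
    have hz : zm Mθ = (k * ((Mθ.erase k).count k + 1)) * zm (Mθ.erase k) := by
      conv_lhs => rw [← Multiset.cons_erase hkθ]
      exact zm_cons k (Mθ.erase k)
    have hcount : (Mθ.erase k).count k + 1 = Mθ.count k := by
      rw [← Multiset.count_cons_self k (Mθ.erase k), Multiset.cons_erase hkθ]
    rw [hz, hcount]
    push_cast
    ring
  · -- both sides are zero
    have h1 : ¬ (θ = mdgm (k ::ₘ Mρ)) := by
      intro h
      have : Mθ = k ::ₘ Mρ := by rw [hMθ, h, coe_rowLens_mdgm _ hposρ]
      have hkθ : k ∈ Mθ := by rw [this]; exact Multiset.mem_cons_self _ _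
      have herase : Mθ.erase k = Mρ := by rw [this, Multiset.erase_cons_head]
      exact hcase ⟨hkθ, by rw [herase]; exact (mdgm_eq_of_coe_rowLens hMρ.symm).symm⟩
    rw [if_neg h1]
    symm
    rw [mul_eq_zero]
    by_cases hkθ : k ∈ Mθ
    · right
      rw [if_neg (show ¬ (mdgm (Mθ.erase k) = ρ) from fun h => hcase ⟨hkθ, h.symm⟩)]
    · left
      have : Multiset.count k Mθ = 0 := Multiset.count_eq_zero.2 hkθ
      rw [this]
      norm_num

/-! ### `D p_k` is a derivation -/

lemma D_pk_derivation (k : ℕ) (hk : 0 < k) (x y : Λ) :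
    S.D (S.p (rowDiagram k)) (x * y)
      = S.D (S.p (rowDiagram k)) x * y + x * S.D (S.p (rowDiagram k)) y := by
  set Dk := S.D (S.p (rowDiagram k)) with hDk
  -- reduce to basis elements
  suffices h : ∀ a b : YoungDiagram,
      Dk (S.p a * S.p b) = Dk (S.p a) * S.p b + S.p a * Dk (S.p b) by
    have hx : ∀ y : Λ, ∀ a : YoungDiagram,
        Dk (S.p a * y) = Dk (S.p a) * y + S.p a * Dk y := by
      intro y a
      have hmap : (Dk.comp (LinearMap.mulLeft ℚ (S.p a)) : Λ →ₗ[ℚ] Λ)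
          = (LinearMap.mulLeft ℚ (Dk (S.p a))) + (LinearMap.mulLeft ℚ (S.p a)).comp Dk := by
        apply S.p.ext
        intro b
        simpa using h a b
      have := congrArg (fun f => f y) hmap
      simpa using this
    have hmap : (Dk.comp (LinearMap.mulRight ℚ y) : Λ →ₗ[ℚ] Λ)
        = (LinearMap.mulRight ℚ y).comp Dk + (LinearMap.mulRight ℚ (Dk y)) := by
      apply S.p.ext
      intro a
      simpa using hx y a
    have := congrArg (fun f => f x) hmap
    simpa using this
  intro a b
  set Ma : Multiset ℕ := (a.rowLens : Multiset ℕ) with hMa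
  set Mb : Multiset ℕ := (b.rowLens : Multiset ℕ) with hMb
  have hposa : ∀ x ∈ Ma, 0 < x := fun x hx => pos_of_mem_coe_rowLens a x hx
  have hposb : ∀ x ∈ Mb, 0 < x := fun x hx => pos_of_mem_coe_rowLens b x hx
  have hposab : ∀ x ∈ Ma + Mb, 0 < x := by
    intro x hx
    rcases Multiset.mem_add.1 hx with h | h
    exacts [hposa x h, hposb x h]
  have hposae : ∀ x ∈ Ma.erase k, 0 < x := fun x hx => hposa x (Multiset.mem_of_mem_erase hx)
  have hposbe : ∀ x ∈ Mb.erase k, 0 < x := fun x hx => hposb x (Multiset.mem_of_mem_erase hx)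
  rw [hDk, S.p_mul_p, D_pk_p S k hk, D_pk_p S k hk, D_pk_p S k hk]
  rw [coe_rowLens_mdgm _ hposab]
  rw [← hMa, ← hMb]
  rw [smul_mul_assoc, mul_smul_comm]
  rw [S.p_mul_p, S.p_mul_p]
  rw [coe_rowLens_mdgm _ hposae, coe_rowLens_mdgm _ hposbe, ← hMb, ← hMa]
  rw [Multiset.count_add]
  by_cases hka : k ∈ Ma
  · have he1 : (Ma + Mb).erase k = Ma.erase k + Mb := by
      rw [Multiset.erase_add_left_pos _ hka]
    by_cases hkb : k ∈ Mb
    · have he2 : Ma.erase k + Mb = Ma + Mb.erase k := by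
        ext i
        by_cases hik : i = k
        · subst hik
          simp only [Multiset.count_add, Multiset.count_erase_self]
          have h1 := Multiset.one_le_count_iff_mem.2 hka
          have h2 := Multiset.one_le_count_iff_mem.2 hkb
          omega
        · simp [Multiset.count_erase_of_ne hik]
      rw [he1, he2]
      rw [← he2]
      push_cast
      rw [← add_smul]
      congr 2
      ring
    · have hcb : Mb.count k = 0 := Multiset.count_eq_zero.2 hkb
      rw [hcb, he1]
      push_cast
      rw [mul_zero, zero_smul, add_zero, add_zero]
  · have hca : Ma.count k = 0 := Multiset.count_eq_zero.2 hka
    by_cases hkb : k ∈ Mb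
    · have he1 : (Ma + Mb).erase k = Ma + Mb.erase k := by
        rw [Multiset.erase_add_right_pos _ hkb]
      rw [hca, he1]
      push_cast
      rw [mul_zero, zero_smul, zero_add, zero_add]
    · have hcb : Mb.count k = 0 := Multiset.count_eq_zero.2 hkb
      rw [hca, hcb]
      push_cast
      simp

/-! ### Representations of the coproduct -/

/-- `f` admits a finite family `(u i, v i)` such that
`D f (x * y) = ∑ i, D (u i) x * D (v i) y`. -/
def Rep (f : Λ) : Prop :=
  ∃ (ι : Type) (_ : Fintype ι) (u v : ι → Λ),
    ∀ x y : Λ, S.D f (x * y) = ∑ i, S.D (u i) x * S.D (v i) y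

lemma rep_one : S.Rep 1 := by
  refine ⟨PUnit, inferInstance, fun _ => 1, fun _ => 1, fun x y => ?_⟩
  simp [S.D_one]

lemma rep_zero : S.Rep 0 := by
  refine ⟨PEmpty, inferInstance, fun i => i.elim, fun i => i.elim, fun x y => ?_⟩
  simp [S.D_zero]

lemma rep_pk (k : ℕ) (hk : 0 < k) : S.Rep (S.p (rowDiagram k)) := by
  refine ⟨Bool, inferInstance, fun i => if i then S.p (rowDiagram k) else 1,
    fun i => if i then 1 else S.p (rowDiagram k), fun x y => ?_⟩
  rw [S.D_pk_derivation k hk]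
  simp [S.D_one, add_comm]

lemma rep_mul {f g : Λ} (hf : S.Rep f) (hg : S.Rep g) : S.Rep (f * g) := by
  obtain ⟨ι, hι, u, v, hf⟩ := hf
  obtain ⟨κ, hκ, a, b, hg⟩ := hg
  refine ⟨ι × κ, inferInstance, fun q => u q.1 * a q.2, fun q => v q.1 * b q.2, fun x y => ?_⟩
  rw [← S.D_comp, hg, map_sum, Fintype.sum_prod_type_right]
  apply Finset.sum_congr rfl
  intro j _
  rw [hf]
  apply Finset.sum_congr rfl
  intro i _
  rw [S.D_comp, S.D_comp]

lemma rep_add {f g : Λ} (hf : S.Rep f) (hg : S.Rep g) : S.Rep (f + g) := by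
  obtain ⟨ι, hι, u, v, hf⟩ := hf
  obtain ⟨κ, hκ, a, b, hg⟩ := hg
  refine ⟨ι ⊕ κ, inferInstance, Sum.elim u a, Sum.elim v b, fun x y => ?_⟩
  rw [S.D_add, LinearMap.add_apply, hf, hg, Fintype.sum_sum_type]
  simp

lemma rep_smul (c : ℚ) {f : Λ} (hf : S.Rep f) : S.Rep (c • f) := by
  obtain ⟨ι, hι, u, v, hf⟩ := hf
  refine ⟨ι, hι, fun i => c • u i, v, fun x y => ?_⟩
  rw [S.D_smul, LinearMap.smul_apply, hf, Finset.smul_sum]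
  apply Finset.sum_congr rfl
  intro i _
  rw [S.D_smul]
  simp [smul_mul_assoc]

lemma rep_PP (M : Multiset ℕ) : (∀ x ∈ M, 0 < x) → S.Rep (S.PP M) := by
  refine Multiset.induction_on M (fun _ => by rw [S.PP_zero]; exact S.rep_one) ?_
  intro k M' ih h
  rw [S.PP_cons]
  exact S.rep_mul (S.rep_pk k (h k (Multiset.mem_cons_self _ _)))
    (ih fun x hx => h x (Multiset.mem_cons_of_mem hx))

lemma rep_p (θ : YoungDiagram) : S.Rep (S.p θ) := by
  rw [p_eq_PP]
  exact S.rep_PP _ (fun x hx => pos_of_mem_coe_rowLens θ x hx)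

lemma rep_all (f : Λ) : S.Rep f := by
  have hf : f ∈ Submodule.span ℚ (Set.range S.p) := by
    rw [S.p.span_eq]; trivial
  induction hf using Submodule.span_induction with
  | mem x hx =>
      obtain ⟨θ, rfl⟩ := hx
      exact S.rep_p θ
  | zero => exact S.rep_zero
  | add x y _ _ hx hy => exact S.rep_add hx hy
  | smul c x _ hx => exact S.rep_smul c hx

/-! ### Consequences of a representation -/

lemma inner_mul_one (x y : Λ) : S.inner (x * y) 1 = S.inner x 1 * S.inner y 1 := by
  have base : ∀ a b : YoungDiagram,
      S.inner (S.p a * S.p b) 1 = S.inner (S.p a) 1 * S.inner (S.p b) 1 := by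
    intro a b
    rw [S.p_mul_p]
    rw [S.inner_symm _ 1, S.inner_symm (S.p a) 1, S.inner_symm (S.p b) 1]
    rw [S.inner_one_p, S.inner_one_p, S.inner_one_p]
    have hpos : ∀ x ∈ (a.rowLens : Multiset ℕ) + (b.rowLens : Multiset ℕ), 0 < x := by
      intro x hx
      rcases Multiset.mem_add.1 hx with h | h
      exacts [pos_of_mem_coe_rowLens a x h, pos_of_mem_coe_rowLens b x h]
    by_cases ha : a = ⊥
    · by_cases hb : b = ⊥
      · subst ha; subst hb
        have hbot : mdgm (((⊥ : YoungDiagram).rowLens : Multiset ℕ)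
            + ((⊥ : YoungDiagram).rowLens : Multiset ℕ)) = (⊥ : YoungDiagram) :=
          mdgm_eq_of_coe_rowLens (by rw [rowLens_bot]; rfl)
        rw [if_pos hbot, if_pos rfl]
        norm_num
      · rw [if_neg, if_neg hb, if_pos ha, mul_zero]
        intro h
        have : (a.rowLens : Multiset ℕ) + (b.rowLens : Multiset ℕ) = 0 := by
          rw [← coe_rowLens_mdgm _ hpos, h, rowLens_bot]; rfl
        exact hb (coe_rowLens_eq_zero_iff.1 (add_eq_zero.1 this).2)
    · rw [if_neg, if_neg ha, zero_mul]
      intro h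
      have : (a.rowLens : Multiset ℕ) + (b.rowLens : Multiset ℕ) = 0 := by
        rw [← coe_rowLens_mdgm _ hpos, h, rowLens_bot]; rfl
      exact ha (coe_rowLens_eq_zero_iff.1 (add_eq_zero.1 this).1)
  -- bilinear extension
  have hx : ∀ y : Λ, ∀ a : YoungDiagram,
      S.inner (S.p a * y) 1 = S.inner (S.p a) 1 * S.inner y 1 := by
    intro y a
    have hmap : ((S.inner.flip 1).comp (LinearMap.mulLeft ℚ (S.p a)) : Λ →ₗ[ℚ] ℚ)
        = S.inner (S.p a) 1 • (S.inner.flip 1) := by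
      apply S.p.ext
      intro b
      simpa [smul_eq_mul] using base a b
    have := congrArg (fun f => f y) hmap
    simpa [smul_eq_mul] using this
  have hmap : ((S.inner.flip 1).comp (LinearMap.mulRight ℚ y) : Λ →ₗ[ℚ] ℚ)
      = S.inner y 1 • (S.inner.flip 1) := by
    apply S.p.ext
    intro a
    have := hx y a
    simpa [smul_eq_mul, mul_comm] using this
  have := congrArg (fun f => f x) hmap
  simpa [smul_eq_mul, mul_comm] using this

lemma inner_D_one (u x : Λ) : S.inner (S.D u x) 1 = S.inner u x := by
  rw [S.D_adjoint, mul_one, S.inner_symm]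

lemma rep_inner {f : Λ} {ι : Type} [Fintype ι] {u v : ι → Λ}
    (hrep : ∀ x y : Λ, S.D f (x * y) = ∑ i, S.D (u i) x * S.D (v i) y)
    (x y : Λ) : S.inner f (x * y) = ∑ i, S.inner (u i) x * S.inner (v i) y := by
  have h1 : S.inner f (x * y) = S.inner (S.D f (x * y)) 1 := by
    rw [S.inner_D_one]
  rw [h1, hrep, map_sum, LinearMap.sum_apply]
  apply Finset.sum_congr rfl
  intro i _
  rw [S.inner_mul_one, S.inner_D_one, S.inner_D_one]

lemma rep_skew {f : Λ} {ι : Type} [Fintype ι] {u v : ι → Λ}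
    (hrep : ∀ x y : Λ, S.D f (x * y) = ∑ i, S.D (u i) x * S.D (v i) y)
    (l : YoungDiagram) :
    (∑ i, (S.s.repr (u i) l) • v i) = S.D (S.s l) f := by
  apply S.inner_ext
  intro ρ
  rw [S.D_adjoint]
  rw [S.rep_inner hrep, map_sum, LinearMap.sum_apply]
  apply Finset.sum_congr rfl
  intro i _
  rw [map_smul, ← S.inner_coord (u i) l]
  simp [smul_eq_mul]

/-! ### Foulkes's identity -/

/-- Foulkes's identity: `D_β(s_α · g) = ∑_λ s_{α/λ} · D_{s_{β/λ}}(g)`. -/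
theorem foulkes (α β : YoungDiagram) (g : Λ) :
    S.D (S.s β) (S.s α * g) = ∑ᶠ l : YoungDiagram, S.skew α l * S.D (S.skew β l) g := by
  classical
  obtain ⟨ι, hι, u, v, hrep⟩ := S.rep_all (S.s β)
  -- the finite set of relevant partitions
  set F : Finset YoungDiagram := Finset.univ.sup fun i : ι => (S.s.repr (u i)).support with hF
  have hskew : ∀ l : YoungDiagram, S.skew β l = ∑ i, (S.s.repr (u i) l) • v i := by
    intro l
    rw [skew, ← S.rep_skew hrep l]
  have hsupp : ∀ l : YoungDiagram, l ∉ F →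
      S.skew α l * S.D (S.skew β l) g = 0 := by
    intro l hl
    have hz : S.skew β l = 0 := by
      rw [hskew l]
      apply Finset.sum_eq_zero
      intro i _
      have : S.s.repr (u i) l = 0 := by
        by_contra h
        exact hl (Finset.le_sup (f := fun i : ι => (S.s.repr (u i)).support)
          (Finset.mem_univ i) (Finsupp.mem_support_iff.2 h))
      rw [this, zero_smul]
    rw [hz, S.D_zero]
    simp
  have hfin : (Function.support fun l => S.skew α l * S.D (S.skew β l) g) ⊆ ↑F := by
    intro l hl
    by_contra h
    exact hl (hsupp l h)
  rw [finsum_eq_sum_of_support_subset _ hfin]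
  -- now compute the finite sum
  have step : ∀ l ∈ F, S.skew α l * S.D (S.skew β l) g
      = ∑ i, (S.s.repr (u i) l) • (S.D (S.s l) (S.s α) * S.D (v i) g) := by
    intro l _
    rw [hskew l, D_sum]
    rw [LinearMap.sum_apply, Finset.mul_sum]
    apply Finset.sum_congr rfl
    intro i _
    rw [S.D_smul]
    simp only [LinearMap.smul_apply]
    rw [skew, mul_smul_comm]
  rw [Finset.sum_congr rfl step, Finset.sum_comm]
  have ui_eq : ∀ i : ι, ∑ l ∈ F, (S.s.repr (u i) l) • S.s l = u i := by
    intro i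
    have hsub : (S.s.repr (u i)).support ⊆ F :=
      Finset.le_sup (f := fun i : ι => (S.s.repr (u i)).support) (Finset.mem_univ i)
    have hlc := S.s.linearCombination_repr (u i)
    rw [Finsupp.linearCombination_apply, Finsupp.sum] at hlc
    rw [← Finset.sum_subset hsub (fun l _ hl => by
      rw [Finsupp.notMem_support_iff.1 hl, zero_smul])]
    exact hlc
  have : ∀ i : ι, ∑ l ∈ F, (S.s.repr (u i) l) • (S.D (S.s l) (S.s α) * S.D (v i) g)
      = S.D (u i) (S.s α) * S.D (v i) g := by
    intro i
    have : S.D (u i) (S.s α) = ∑ l ∈ F, (S.s.repr (u i) l) • S.D (S.s l) (S.s α) := by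
      conv_lhs => rw [← ui_eq i]
      rw [D_sum]
      rw [LinearMap.sum_apply]
      apply Finset.sum_congr rfl
      intro l _
      rw [S.D_smul]
      rfl
    rw [this, Finset.sum_mul]
    apply Finset.sum_congr rfl
    intro l _
    rw [smul_mul_assoc]
  rw [Finset.sum_congr rfl (fun i _ => this i)]
  exact hrep (S.s α) g

end SymmFn
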